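/- For every real number λ with 0 < λ < 2, one has 4·(λ²−λ+1)·F(2/3, −5/3, 4/3; 1−λ) − (1/3)·(λ+1)·(8λ²−11λ+8)·F(2/3, −2/3, 4/3; 1−λ) + λ·(1−λ)²·F(2/3, 1/3, 4/3; 1−λ) = (1/3)·λ^{4/3}·(λ+1). -/

import Mathlib

open scoped BigOperators

/-- The Gauss hypergeometric series `F(a,b,c;z)`. -/
noncomputable def hypF (a b c z : ℝ) : ℝ :=
  ∑' n : ℕ,
    (Polynomial.eval a (ascPochhammer ℝ n) * Polynomial.eval b (ascPochhammer ℝ n) /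
      (Polynomial.eval c (ascPochhammer ℝ n) * (n.factorial : ℝ))) * z ^ n

noncomputable def PP (x : ℝ) (n : ℕ) : ℝ := Polynomial.eval x (ascPochhammer ℝ n)
lemma PP_zero (x : ℝ) : PP x 0 = 1 := by simp [PP]
lemma PP_succ (x : ℝ) (n : ℕ) : PP x (n + 1) = PP x n * (x + n) := by
  simp [PP, ascPochhammer_succ_right]
lemma PP_pos {x : ℝ} (hx : 0 < x) (n : ℕ) : 0 < PP x n := by
  induction n with
  | zero => simp [PP_zero]
  | succ n ih => rw [PP_succ]; positivity
noncomputable def cc (b : ℝ) (n : ℕ) : ℝ :=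
  PP (2/3) n * PP b n / (PP (4/3) n * n.factorial)
noncomputable def bb (n : ℕ) : ℝ := PP (-4/3) n / n.factorial
lemma bb_zero : bb 0 = 1 := by simp [bb, PP_zero]
lemma cc_zero (b : ℝ) : cc b 0 = 1 := by simp [cc, PP_zero]
lemma cc_rec (b : ℝ) (n : ℕ) :
    cc b (n + 1) * ((4/3 + n) * (n + 1)) = cc b n * ((2/3 + n) * (b + n)) := by
  have h4 : PP (4/3) n ≠ 0 := (PP_pos (by norm_num) n).ne'
  have hf : (n.factorial : ℝ) ≠ 0 := by positivity
  simp only [cc, PP_succ, Nat.factorial_succ]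
  push_cast; field_simp
lemma bb_rec (n : ℕ) : bb (n + 1) * (n + 1) = bb n * (n - 4/3) := by
  have hf : (n.factorial : ℝ) ≠ 0 := by positivity
  simp only [bb, PP_succ, Nat.factorial_succ]
  push_cast; field_simp; ring

lemma cc_rec' (b : ℝ) (n : ℕ) :
    cc b (n + 1) = cc b n * ((2/3 + n) * (b + n)) / ((4/3 + n) * (n + 1)) := by
  have h : ((4/3 + (n:ℝ)) * (n + 1)) ≠ 0 := by positivity
  rw [eq_div_iff h]; exact cc_rec b n

lemma bb_rec' (n : ℕ) : bb (n + 1) = bb n * (n - 4/3) / (n + 1) := by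
  have h : ((n:ℝ) + 1) ≠ 0 := by positivity
  rw [eq_div_iff h]; exact bb_rec n

-- E lemmas
lemma E5 (n : ℕ) : 6 * cc (-5/3) n * ((n:ℝ) - 5/3) * ((n:ℝ) - 2/3) * ((n:ℝ) + 1/3)
    = 5 * bb n * ((n:ℝ) - 4/3) * ((n:ℝ) - 1/3) := by
  induction n with
  | zero => rw [cc_zero, bb_zero]; push_cast; ring
  | succ n ih =>
      have h2 : ((n:ℝ) + 1) ≠ 0 := by positivity
      apply mul_right_cancel₀ h2
      push_cast
      linear_combination (6*((n:ℝ)-2/3)*((n:ℝ)+1/3)) * cc_rec (-5/3) n + (-5*((n:ℝ)-1/3)*((n:ℝ)+2/3)) * bb_rec n + (((n:ℝ)+2/3)) * ih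

lemma E2 (n : ℕ) : 2 * cc (-2/3) n * ((n:ℝ) - 2/3) * ((n:ℝ) + 1/3)
    = -(bb n * ((n:ℝ) - 4/3) * ((n:ℝ) - 1/3)) := by
  induction n with
  | zero => rw [cc_zero, bb_zero]; push_cast; ring
  | succ n ih =>
      have h2 : ((n:ℝ) + 1) ≠ 0 := by positivity
      apply mul_right_cancel₀ h2
      push_cast
      linear_combination (2*((n:ℝ)+1/3)) * cc_rec (-2/3) n + (((n:ℝ)-1/3)*((n:ℝ)+2/3)) * bb_rec n + (((n:ℝ)+2/3)) * ih

lemma E1 (n : ℕ) : 4 * cc (1/3) n * ((n:ℝ) + 1/3)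
    = 3 * bb n * ((n:ℝ) - 4/3) * ((n:ℝ) - 1/3) := by
  induction n with
  | zero => rw [cc_zero, bb_zero]; push_cast; ring
  | succ n ih =>
      have h2 : ((n:ℝ) + 1) ≠ 0 := by positivity
      apply mul_right_cancel₀ h2
      push_cast
      linear_combination (4:ℝ) * cc_rec (1/3) n + (-3*((n:ℝ)-1/3)*((n:ℝ)+2/3)) * bb_rec n + (((n:ℝ)+2/3)) * ih

-- bounds
lemma cc_bound {b : ℝ} (hb : |b| ≤ 5/3) (n : ℕ) : |cc b n| ≤ 1 := by
  induction n with
  | zero => simp [cc_zero]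
  | succ n ih =>
      rw [cc_rec']
      have h : (0:ℝ) < (4/3 + (n:ℝ)) * (n + 1) := by positivity
      rw [abs_div, abs_mul, abs_mul, abs_of_pos (by positivity : (0:ℝ) < 2/3 + (n:ℝ)),
        abs_of_pos h]
      rw [div_le_one h]
      have hbn : |b + (n:ℝ)| ≤ (n:ℝ) + 5/3 := by
        have := abs_add_le b (n:ℝ)
        have : |(n:ℝ)| = (n:ℝ) := abs_of_nonneg (by positivity)
        rw [abs_le] at hb
        rw [abs_le]; constructor <;> [nlinarith [Nat.cast_nonneg (α := ℝ) n]; nlinarith [Nat.cast_nonneg (α := ℝ) n]]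
      calc |cc b n| * ((2/3 + (n:ℝ)) * |b + n|) ≤ 1 * ((2/3 + (n:ℝ)) * ((n:ℝ) + 5/3)) := by
            apply mul_le_mul ih ?_ (by positivity) (by norm_num)
            exact mul_le_mul_of_nonneg_left hbn (by positivity)
        _ ≤ (4/3 + (n:ℝ)) * (n + 1) := by nlinarith [Nat.cast_nonneg (α := ℝ) n]

lemma bb_bound (n : ℕ) : |bb n| ≤ 4/3 := by
  induction n with
  | zero => simp [bb_zero]; norm_num
  | succ n ih =>
      rw [bb_rec']
      have h2 : (0:ℝ) < (n:ℝ) + 1 := by positivity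
      rw [abs_div, abs_mul, abs_of_pos h2, div_le_iff₀ h2]
      have hbn : |(n:ℝ) - 4/3| ≤ (n:ℝ) + 1 ∨ n = 0 := by
        rcases Nat.eq_zero_or_pos n with h | h
        · right; exact h
        · left
          have : (1:ℝ) ≤ (n:ℝ) := by exact_mod_cast h
          rw [abs_le]; constructor <;> nlinarith
      rcases hbn with h | h
      · calc |bb n| * |(n:ℝ) - 4/3| ≤ (4/3) * ((n:ℝ)+1) := by
              apply mul_le_mul ih h (abs_nonneg _) (by norm_num)
          _ = 4/3 * ((n:ℝ)+1) := rfl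
      · subst h
        rw [bb_zero, abs_one, one_mul]
        rw [show ((0:ℕ):ℝ) - 4/3 = -(4/3) by norm_num, abs_neg, abs_of_nonneg (by norm_num : (0:ℝ) ≤ 4/3)]
        norm_num

lemma summable_cc {b z : ℝ} (hb : |b| ≤ 5/3) (hz : |z| < 1) :
    Summable fun n => cc b n * z ^ n := by
  apply Summable.of_norm_bounded (g := fun n => |z| ^ n)
    (summable_geometric_of_lt_one (abs_nonneg z) hz)
  intro n
  rw [norm_mul, norm_pow, Real.norm_eq_abs, Real.norm_eq_abs]
  calc |cc b n| * |z| ^ n ≤ 1 * |z| ^ n := by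
        exact mul_le_mul_of_nonneg_right (cc_bound hb n) (by positivity)
    _ = |z| ^ n := one_mul _

lemma summable_bbz {z : ℝ} (hz : |z| < 1) : Summable fun n => bb n * z ^ n := by
  apply Summable.of_norm_bounded (g := fun n => (4/3) * |z| ^ n)
    ((summable_geometric_of_lt_one (abs_nonneg z) hz).mul_left _)
  intro n
  rw [norm_mul, norm_pow, Real.norm_eq_abs, Real.norm_eq_abs]
  exact mul_le_mul_of_nonneg_right (bb_bound n) (by positivity)

lemma summable_deriv_bound {r : ℝ} (hr0 : 0 ≤ r) (hr1 : r < 1) :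
    Summable fun n : ℕ => (4/3) * ((n : ℝ) * r ^ (n - 1)) := by
  apply Summable.mul_left
  rw [← summable_nat_add_iff 1]
  have h : ∀ n : ℕ, ((n + 1 : ℕ) : ℝ) * r ^ (n + 1 - 1) = (n : ℝ) * r ^ n + r ^ n := by
    intro n; push_cast; ring_nf
  apply Summable.congr _ (fun n => (h n).symm)
  exact ((summable_pow_mul_geometric_of_norm_lt_one 1
    (by rwa [Real.norm_eq_abs, abs_of_nonneg hr0])).congr (by intro n; simp)).add
    (summable_geometric_of_lt_one hr0 hr1)

lemma hasSum_bb {z : ℝ} (hz : |z| < 1) :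
    HasSum (fun n => bb n * z ^ n) ((1 - z) ^ ((4:ℝ)/3)) := by
  set r : ℝ := (1 + |z|) / 2 with hrdef
  have hrpos : 0 < r := by rw [hrdef]; positivity
  have hr0 : 0 ≤ r := hrpos.le
  have hr1 : r < 1 := by rw [hrdef]; linarith
  have hzr : |z| < r := by rw [hrdef]; linarith
  have hu := summable_deriv_bound hr0 hr1
  set S : ℝ → ℝ := fun y => ∑' n, bb n * y ^ n with hSdef
  -- bound on derivative terms
  have hbound : ∀ (n : ℕ) (y : ℝ), y ∈ Metric.ball (0:ℝ) r →
      ‖bb n * ((n:ℝ) * y ^ (n - 1))‖ ≤ (4/3) * ((n:ℝ) * r ^ (n - 1)) := by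
    intro n y hy
    rw [Metric.mem_ball, dist_zero_right, Real.norm_eq_abs] at hy
    rw [norm_mul, norm_mul, norm_pow, Real.norm_eq_abs, Real.norm_eq_abs, Real.norm_eq_abs,
      abs_of_nonneg (Nat.cast_nonneg n : (0:ℝ) ≤ n)]
    have h1 : |y| ^ (n - 1) ≤ r ^ (n - 1) := pow_le_pow_left₀ (abs_nonneg y) hy.le _
    exact mul_le_mul (bb_bound n) (mul_le_mul_of_nonneg_left h1 (Nat.cast_nonneg n))
      (by positivity) (by norm_num)
  have hderiv : ∀ y ∈ Metric.ball (0:ℝ) r,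
      HasDerivAt S (∑' n, bb n * ((n:ℝ) * y ^ (n - 1))) y := by
    intro y hy
    exact hasDerivAt_tsum_of_isPreconnected hu Metric.isOpen_ball
      (convex_ball (0:ℝ) r).isPreconnected
      (fun n y _ => (hasDerivAt_pow n y).const_mul (bb n))
      hbound (by rw [Metric.mem_ball, dist_zero_right, norm_zero]; exact hrpos)
      (by simpa using summable_bbz (show |(0:ℝ)| < 1 by simp)) hy
  -- the ODE
  have hODE : ∀ y : ℝ, |y| < r →
      (1 - y) * (∑' n, bb n * ((n:ℝ) * y ^ (n - 1))) = -(4/3) * S y := by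
    intro y hy
    have hy1 : |y| < 1 := hy.trans hr1
    have hsum1 : Summable fun n => bb n * ((n:ℝ) * y ^ (n - 1)) := by
      apply Summable.of_norm_bounded hu
      intro n
      exact hbound n y (by rwa [Metric.mem_ball, dist_zero_right, Real.norm_eq_abs])
    set T : ℝ := ∑' n, bb n * ((n:ℝ) * y ^ (n - 1)) with hTdef
    have hT : HasSum (fun n => bb n * ((n:ℝ) * y ^ (n - 1))) T := hsum1.hasSum
    have hshift : HasSum (fun n => bb (n+1) * (((n:ℝ)+1) * y ^ n)) T := by
      have h2 := (hasSum_nat_add_iff' 1).2 hT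
      simp only [Finset.range_one, Finset.sum_singleton, Nat.cast_zero, Nat.add_sub_cancel] at h2
      convert h2 using 2 with n
      · rfl
      · push_cast; ring
      · simp
    have hyT : HasSum (fun n => bb n * (n:ℝ) * y ^ n) (y * T) := by
      have h3 := hT.mul_left y
      have heq : ∀ n : ℕ, y * (bb n * ((n:ℝ) * y ^ (n - 1))) = bb n * (n:ℝ) * y ^ n := by
        intro n
        cases n with
        | zero => simp
        | succ m => simp only [Nat.add_sub_cancel, pow_succ]; push_cast; ring
      exact (funext heq) ▸ h3
    have hS : HasSum (fun n => bb n * y ^ n) (S y) := (summable_bbz hy1).hasSum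
    have hcomb := (hshift.sub hyT).add (hS.mul_left (4/3))
    have hzero : (fun n => (bb (n+1) * (((n:ℝ)+1) * y ^ n) - bb n * (n:ℝ) * y ^ n)
        + (4/3) * (bb n * y ^ n)) = fun _ : ℕ => (0:ℝ) := by
      funext n
      linear_combination (y ^ n) * bb_rec n
    rw [hzero] at hcomb
    have := hcomb.unique hasSum_zero
    linarith
  -- constancy of g
  set g := fun y : ℝ => S y * (1 - y) ^ (-(4:ℝ)/3) with hgdef
  have hzr' : -r < z ∧ z < r := abs_lt.1 hzr
  have hg : ∀ y ∈ Set.Icc (min z 0) (max z 0), HasDerivAt g 0 y := by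
    intro y hy
    obtain ⟨hy1, hy2⟩ := hy
    have hya : |y| ≤ |z| := by
      rw [abs_le]
      constructor
      · have h5 : -|z| ≤ min z 0 := le_min (neg_abs_le z) (by linarith [abs_nonneg z])
        linarith
      · have h5 : max z 0 ≤ |z| := max_le (le_abs_self z) (abs_nonneg z)
        linarith
    have hyr : |y| < r := lt_of_le_of_lt hya hzr
    have hy3 : (0:ℝ) < 1 - y := by
      have := (abs_lt.1 (lt_of_le_of_lt hya (hzr.trans hr1))).2
      linarith
    have hdS := hderiv y (by rwa [Metric.mem_ball, dist_zero_right, Real.norm_eq_abs])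
    have hd1 : HasDerivAt (fun x : ℝ => 1 - x) (-1) y := by
      simpa using (hasDerivAt_id y).const_sub 1
    have hdw := hd1.rpow_const (p := -(4:ℝ)/3) (Or.inl hy3.ne')
    have hprod := hdS.mul hdw
    have hw : (1 - y) ^ (-(4:ℝ)/3) = (1 - y) ^ (-(4:ℝ)/3 - 1) * (1 - y) := by
      rw [← Real.rpow_add_one hy3.ne' (-(4:ℝ)/3 - 1)]
      norm_num
    have hkey := hODE y hyr
    convert hprod using 1
    · rfl
    · rfl
    · rfl
    rw [hw]
    linear_combination (-((1 - y) ^ (-(4:ℝ)/3 - 1))) * hkey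
  have hcont : ContinuousOn g (Set.Icc (min z 0) (max z 0)) :=
    fun y hy => (hg y hy).continuousAt.continuousWithinAt
  have hconst := constant_of_has_deriv_right_zero hcont
    (fun y hy => (hg y (Set.Ico_subset_Icc_self hy)).hasDerivWithinAt)
  have h1 : g z = g (min z 0) := hconst z ⟨min_le_left _ _, le_max_left _ _⟩
  have h2 : g 0 = g (min z 0) := hconst 0 ⟨min_le_right _ _, le_max_right _ _⟩
  have hS0 : S 0 = 1 := by
    have h4 : S 0 = ∑' n : ℕ, bb n * (0:ℝ) ^ n := rfl
    rw [h4, tsum_eq_single 0 (fun n hn => by simp [zero_pow hn])]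
    simp [bb_zero]
  have hg0 : g 0 = 1 := by
    rw [hgdef]; simp only [sub_zero, Real.one_rpow, hS0, mul_one]
  have hgz : S z * (1 - z) ^ (-(4:ℝ)/3) = 1 := by
    have := h1.trans h2.symm
    rw [hgdef] at this
    simpa [hg0] using this.trans hg0
  have hz3 : (0:ℝ) < 1 - z := by have := (abs_lt.1 hz).2; linarith
  have hSz : S z = (1 - z) ^ ((4:ℝ)/3) := by
    have hmul := congrArg (fun t => t * (1 - z) ^ ((4:ℝ)/3)) hgz
    simp only [one_mul] at hmul
    rw [mul_assoc, ← Real.rpow_add hz3] at hmul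
    norm_num at hmul
    exact hmul
  have := (summable_bbz hz).hasSum
  rwa [show (∑' n, bb n * z ^ n) = S z from rfl, hSz] at this

lemma hasSum_shift {f : ℕ → ℝ} {x a : ℝ} (k : ℕ) (h : HasSum (fun n => f n * x ^ n) a) :
    HasSum (fun n => (if k ≤ n then f (n - k) else 0) * x ^ n) (x ^ k * a) := by
  have h2 : HasSum ((fun n => (if k ≤ n then f (n - k) else 0) * x ^ n) ∘ (fun n => n + k))
      (x ^ k * a) := by
    have heq : ∀ n : ℕ, ((fun n => (if k ≤ n then f (n - k) else 0) * x ^ n) ∘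
        (fun n => n + k)) n = x ^ k * (f n * x ^ n) := by
      intro n
      simp only [Function.comp_apply, if_pos (Nat.le_add_left k n), Nat.add_sub_cancel, pow_add]
      ring
    exact (funext heq) ▸ (h.mul_left (x ^ k))
  refine (Function.Injective.hasSum_iff (add_left_injective k) ?_).1 h2
  intro m hm
  have hmk : ¬ k ≤ m := by
    intro hk
    exact hm ⟨m - k, by simpa using Nat.sub_add_cancel hk⟩
  simp [if_neg hmk]

lemma cc_one (b : ℝ) : cc b 1 = b / 2 := by
  have h := cc_rec b 0
  rw [cc_zero] at h
  push_cast at h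
  linarith

lemma cc_two (b : ℝ) : cc b 2 = 5 * b * (b + 1) / 28 := by
  have h := cc_rec b 1
  rw [cc_one] at h
  push_cast at h
  linear_combination (3/14) * h

lemma bb_one : bb 1 = -(4/3) := by
  have h := bb_rec 0
  rw [bb_zero] at h
  push_cast at h
  linarith

lemma bb_two : bb 2 = 2/9 := by
  have h := bb_rec 1
  rw [bb_one] at h
  push_cast at h
  linarith

lemma m_sub_ne (m : ℕ) : ((m:ℝ) - 2/3) ≠ 0 := by
  rcases Nat.eq_zero_or_pos m with h | h
  · subst h; norm_num
  · have : (1:ℝ) ≤ (m:ℝ) := by exact_mod_cast h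
    intro hc; linarith

set_option maxHeartbeats 4000000 in
lemma coeff_id (n : ℕ) :
    4 * (cc (-5/3) n - (if 1 ≤ n then cc (-5/3) (n-1) else 0)
        + (if 2 ≤ n then cc (-5/3) (n-2) else 0))
      - (1/3) * (10 * cc (-2/3) n - 15 * (if 1 ≤ n then cc (-2/3) (n-1) else 0)
        + 21 * (if 2 ≤ n then cc (-2/3) (n-2) else 0)
        - 8 * (if 3 ≤ n then cc (-2/3) (n-3) else 0))
      + ((if 2 ≤ n then cc (1/3) (n-2) else 0) - (if 3 ≤ n then cc (1/3) (n-3) else 0))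
    = (1/3) * (2 * bb n - (if 1 ≤ n then bb (n-1) else 0)) := by
  match n with
  | 0 => norm_num [cc_zero, bb_zero]
  | 1 => norm_num [cc_zero, cc_one, bb_zero, bb_one]
  | 2 => norm_num [cc_zero, cc_one, cc_two, bb_zero, bb_one, bb_two]
  | (m + 3) =>
    have e1 : m + 3 - 1 = m + 2 := by omega
    have e2 : m + 3 - 2 = m + 1 := by omega
    have e3 : m + 3 - 3 = m := by omega
    simp only [eq_true (by omega : 1 ≤ m + 3), eq_true (by omega : 2 ≤ m + 3),
      eq_true (by omega : 3 ≤ m + 3), if_true, e1, e2, e3]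
    set x : ℝ := (m : ℝ) with hxdef
    have hx0 : (0:ℝ) ≤ x := Nat.cast_nonneg m
    have hne : x - 2/3 ≠ 0 := m_sub_ne m
    have h1 : x + 1 ≠ 0 := by positivity
    have h2 : x + 2 ≠ 0 := by positivity
    have h3 : x + 3 ≠ 0 := by positivity
    have h13 : x + 1/3 ≠ 0 := by positivity
    have h23 : x + 2/3 ≠ 0 := by positivity
    have h43 : x + 4/3 ≠ 0 := by positivity
    have h73 : x + 7/3 ≠ 0 := by positivity
    have h103 : x + 10/3 ≠ 0 := by positivity
    -- cleared recurrence and E-lemma instances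
    have R0 := bb_rec m
    have R1 := bb_rec (m + 1)
    have R2 := bb_rec (m + 2)
    have hE5_1 := E5 (m+1); have hE5_2 := E5 (m+2); have hE5_3 := E5 (m+3)
    have hE2_0 := E2 m; have hE2_1 := E2 (m+1); have hE2_2 := E2 (m+2); have hE2_3 := E2 (m+3)
    have hE1_0 := E1 m; have hE1_1 := E1 (m+1)
    push_cast at R0 R1 R2 hE5_1 hE5_2 hE5_3 hE2_0 hE2_1 hE2_2 hE2_3 hE1_0 hE1_1
    have Pb2 : bb (m+2) * ((x+1)*(x+2)) = bb m * ((x-4/3)*(x-1/3)) := by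
      linear_combination (x+1) * R1 + (x-1/3) * R0
    have Pb3 : bb (m+3) * ((x+1)*(x+2)*(x+3)) = bb m * ((x-4/3)*(x-1/3)*(x+2/3)) := by
      linear_combination (x+1)*(x+2) * R2 + (x+2/3) * Pb2
    have P5_1 : cc (-5/3) (m+1) * (6*(x-2/3)*(x+1/3)*(x+4/3)*(x+1))
        = bb m * (5*(x-4/3)*(x-1/3)*(x+2/3)) := by
      linear_combination (x+1) * hE5_1 + 5*(x-1/3)*(x+2/3) * R0
    have P5_2 : cc (-5/3) (m+2) * (6*(x+1/3)*(x+4/3)*(x+7/3)*(x+1)*(x+2))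
        = bb m * (5*(x+2/3)*(x+5/3)*(x-4/3)*(x-1/3)) := by
      linear_combination (x+1)*(x+2) * hE5_2 + 5*(x+2/3)*(x+5/3) * Pb2
    have P5_3 : cc (-5/3) (m+3) * (6*(x+4/3)*(x+7/3)*(x+10/3)*(x+1)*(x+2)*(x+3))
        = bb m * (5*(x+5/3)*(x+8/3)*(x-4/3)*(x-1/3)*(x+2/3)) := by
      linear_combination (x+1)*(x+2)*(x+3) * hE5_3 + 5*(x+5/3)*(x+8/3) * Pb3
    have P2_0 : cc (-2/3) m * (2*(x-2/3)*(x+1/3)) = bb m * (-((x-4/3)*(x-1/3))) := by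
      linear_combination hE2_0
    have P2_1 : cc (-2/3) (m+1) * (2*(x+1/3)*(x+4/3)*(x+1))
        = bb m * (-((x-1/3)*(x+2/3)*(x-4/3))) := by
      linear_combination (x+1) * hE2_1 + (-((x-1/3)*(x+2/3))) * R0
    have P2_2 : cc (-2/3) (m+2) * (2*(x+4/3)*(x+7/3)*(x+1)*(x+2))
        = bb m * (-((x+2/3)*(x+5/3)*(x-4/3)*(x-1/3))) := by
      linear_combination (x+1)*(x+2) * hE2_2 + (-((x+2/3)*(x+5/3))) * Pb2
    have P2_3 : cc (-2/3) (m+3) * (2*(x+7/3)*(x+10/3)*(x+1)*(x+2)*(x+3))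
        = bb m * (-((x+5/3)*(x+8/3)*(x-4/3)*(x-1/3)*(x+2/3))) := by
      linear_combination (x+1)*(x+2)*(x+3) * hE2_3 + (-((x+5/3)*(x+8/3))) * Pb3
    have P1_0 : cc (1/3) m * (4*(x+1/3)) = bb m * (3*(x-4/3)*(x-1/3)) := by
      linear_combination hE1_0
    have P1_1 : cc (1/3) (m+1) * (4*(x+4/3)*(x+1)) = bb m * (3*(x-1/3)*(x+2/3)*(x-4/3)) := by
      linear_combination (x+1) * hE1_1 + 3*(x-1/3)*(x+2/3) * R0
    have hD : (12:ℝ)*(x-2/3)*(x+1/3)*(x+4/3)*(x+7/3)*(x+10/3)*(x+1)*(x+2)*(x+3) ≠ 0 := by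
      have h12 : (12:ℝ) ≠ 0 := by norm_num
      exact mul_ne_zero (mul_ne_zero (mul_ne_zero (mul_ne_zero (mul_ne_zero (mul_ne_zero
        (mul_ne_zero (mul_ne_zero h12 hne) h13) h43) h73) h103) h1) h2) h3
    apply mul_right_cancel₀ hD
    linear_combination
        (4*(2*(x-2/3)*(x+1/3))) * P5_3
      + (-4*(2*(x-2/3)*(x+10/3)*(x+3))) * P5_2
      + (4*(2*(x+7/3)*(x+10/3)*(x+2)*(x+3))) * P5_1
      + (-(10/3)*(6*(x-2/3)*(x+1/3)*(x+4/3))) * P2_3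
      + (5*(6*(x-2/3)*(x+1/3)*(x+10/3)*(x+3))) * P2_2
      + (-7*(6*(x-2/3)*(x+7/3)*(x+10/3)*(x+2)*(x+3))) * P2_1
      + ((8/3)*(6*(x+4/3)*(x+7/3)*(x+10/3)*(x+1)*(x+2)*(x+3))) * P2_0
      + ((3*(x-2/3)*(x+1/3)*(x+7/3)*(x+10/3)*(x+2)*(x+3))) * P1_1
      + (-(3*(x-2/3)*(x+4/3)*(x+7/3)*(x+10/3)*(x+1)*(x+2)*(x+3))) * P1_0
      + (-(2/3)*(12*(x-2/3)*(x+1/3)*(x+4/3)*(x+7/3)*(x+10/3))) * Pb3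
      + ((1/3)*(12*(x-2/3)*(x+1/3)*(x+4/3)*(x+7/3)*(x+10/3)*(x+3))) * Pb2

lemma hasSum_congr_fun {f g : ℕ → ℝ} {a : ℝ} (h : HasSum f a) (he : ∀ n, f n = g n) :
    HasSum g a := (funext he : f = g) ▸ h

lemma hypF_eq (b z : ℝ) : hypF (2 / 3) b (4 / 3) z = ∑' n : ℕ, cc b n * z ^ n := rfl

theorem stmt13 (l : ℝ) (h0 : 0 < l) (h2 : l < 2) :
    4 * (l ^ 2 - l + 1) * hypF (2 / 3) (-5 / 3) (4 / 3) (1 - l)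
      - (1 / 3) * (l + 1) * (8 * l ^ 2 - 11 * l + 8) * hypF (2 / 3) (-2 / 3) (4 / 3) (1 - l)
      + l * (1 - l) ^ 2 * hypF (2 / 3) (1 / 3) (4 / 3) (1 - l)
      = (1 / 3) * l ^ ((4 : ℝ) / 3) * (l + 1) := by
  have hz : |1 - l| < 1 := by rw [abs_lt]; constructor <;> linarith
  have hA : HasSum (fun n => cc (-5 / 3) n * (1 - l) ^ n) (hypF (2 / 3) (-5 / 3) (4 / 3) (1 - l)) := by
    rw [hypF_eq]; exact (summable_cc (by rw [abs_le]; norm_num) hz).hasSum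
  have hB : HasSum (fun n => cc (-2 / 3) n * (1 - l) ^ n) (hypF (2 / 3) (-2 / 3) (4 / 3) (1 - l)) := by
    rw [hypF_eq]; exact (summable_cc (by rw [abs_le]; norm_num) hz).hasSum
  have hC : HasSum (fun n => cc (1 / 3) n * (1 - l) ^ n) (hypF (2 / 3) (1 / 3) (4 / 3) (1 - l)) := by
    rw [hypF_eq]; exact (summable_cc (by rw [abs_le]; norm_num) hz).hasSum
  have hW : HasSum (fun n => bb n * (1 - l) ^ n) (l ^ ((4 : ℝ) / 3)) := by
    have := hasSum_bb hz
    rwa [show (1 : ℝ) - (1 - l) = l by ring] at this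
  have H := ((((hA.mul_left 4).sub ((hasSum_shift 1 hA).mul_left 4)).add
      ((hasSum_shift 2 hA).mul_left 4)).sub
    (((((hB.mul_left 10).sub ((hasSum_shift 1 hB).mul_left 15)).add
      ((hasSum_shift 2 hB).mul_left 21)).sub ((hasSum_shift 3 hB).mul_left 8)).mul_left (1/3))).add
    ((hasSum_shift 2 hC).sub (hasSum_shift 3 hC))
  have HR := (hW.mul_left (2/3)).sub ((hasSum_shift 1 hW).mul_left (1/3))
  have hpt : ∀ n : ℕ,
      (2 / 3 * (bb n * (1 - l) ^ n) - 1 / 3 * ((if 1 ≤ n then bb (n - 1) else 0) * (1 - l) ^ n))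
      = (4 * (cc (-5 / 3) n * (1 - l) ^ n)
          - 4 * ((if 1 ≤ n then cc (-5 / 3) (n - 1) else 0) * (1 - l) ^ n)
          + 4 * ((if 2 ≤ n then cc (-5 / 3) (n - 2) else 0) * (1 - l) ^ n)
        - 1 / 3 * (10 * (cc (-2 / 3) n * (1 - l) ^ n)
          - 15 * ((if 1 ≤ n then cc (-2 / 3) (n - 1) else 0) * (1 - l) ^ n)
          + 21 * ((if 2 ≤ n then cc (-2 / 3) (n - 2) else 0) * (1 - l) ^ n)
          - 8 * ((if 3 ≤ n then cc (-2 / 3) (n - 3) else 0) * (1 - l) ^ n))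
        + ((if 2 ≤ n then cc (1 / 3) (n - 2) else 0) * (1 - l) ^ n
          - (if 3 ≤ n then cc (1 / 3) (n - 3) else 0) * (1 - l) ^ n)) := by
    intro n
    linear_combination (-((1 - l) ^ n)) * coeff_id n
  have hEq := H.unique (hasSum_congr_fun HR hpt)
  linear_combination hEq
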